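/- Let G be a Hamiltonian graph of order 2n such that neither G nor its complement contains a cycle of length 2n - 1. Then there is a partition V(G) = U₁ ∪ U₂ with |U₁| = |U₂| = n such that both U₁ and U₂ are independent sets in G; moreover there exists a vertex u such that G - u is isomorphic to the complete bipartite graph K_{n,n-1}. -/

import Mathlib

open SimpleGraph Finset

def HasCycleLen {V : Type*} (G : SimpleGraph V) (t : ℕ) : Prop :=
  ∃ (v : V) (w : G.Walk v v), w.IsCycle ∧ w.length = t

namespace NoC

variable {V : Type*}

/-- Build a walk from a chain of adjacencies. -/
def ofChain (G : SimpleGraph V) : (a : V) → (l : List V) → (b : V) →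
    List.Chain G.Adj a (l ++ [b]) → G.Walk a b
  | _, [], _, h => Walk.cons (List.chain_cons.mp h).1 Walk.nil
  | _, c :: l, b, h =>
      Walk.cons (List.chain_cons.mp h).1 (ofChain G c l b (List.chain_cons.mp h).2)

lemma support_ofChain (G : SimpleGraph V) (a : V) (l : List V) (b : V)
    (h : List.Chain G.Adj a (l ++ [b])) :
    (ofChain G a l b h).support = a :: (l ++ [b]) := by
  induction l generalizing a with
  | nil => simp [ofChain]
  | cons c l ih => simp [ofChain, ih]; exact ih _ _

lemma length_ofChain (G : SimpleGraph V) (a : V) (l : List V) (b : V)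
    (h : List.Chain G.Adj a (l ++ [b])) :
    (ofChain G a l b h).length = l.length + 1 := by
  have := congrArg List.length (support_ofChain G a l b h)
  simpa [Walk.length_support] using this

lemma closing_edge_not_mem {G : SimpleGraph V} {a b : V} (p : G.Walk a b)
    (hp : p.support.Nodup) (h2 : 2 ≤ p.length) : s(b, a) ∉ p.edges := by
  intro hmem
  cases p with
  | nil => simp at h2
  | @cons _ c _ h q =>
    rw [Walk.edges_cons, List.mem_cons] at hmem
    rw [Walk.support_cons, List.nodup_cons] at hp
    rcases hmem with hmem | hmem
    · have hab : a ≠ b := by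
        rintro rfl
        exact hp.1 q.end_mem_support
      have hbc : b = c := by
        rcases Sym2.eq_iff.mp hmem with ⟨h1, _⟩ | ⟨h1, _⟩
        · exact absurd h1.symm hab
        · exact h1
      subst hbc
      cases q with
      | nil => simp [Walk.length_cons] at h2
      | @cons _ d _ h' q' =>
        rw [Walk.support_cons, List.nodup_cons] at hp
        exact hp.2.1 q'.end_mem_support
    · exact hp.1 (Walk.snd_mem_support_of_mem_edges q hmem)

lemma hasCycleLen_of_list (G : SimpleGraph V) (a : V) (l : List V)
    (hnd : (a :: l).Nodup) (hlen : 2 ≤ l.length)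
    (hch : List.Chain G.Adj a l)
    (hcl : G.Adj (l.getLast (by rintro rfl; simp at hlen)) a) :
    HasCycleLen G (l.length + 1) := by
  have hne : l ≠ [] := by rintro rfl; simp at hlen
  have hch' : List.Chain G.Adj a (l.dropLast ++ [l.getLast hne]) := by
    rwa [List.dropLast_append_getLast]
  let p : G.Walk a (l.getLast hne) := ofChain G a l.dropLast (l.getLast hne) hch'
  have hsup : p.support = a :: l := by
    rw [support_ofChain, List.dropLast_append_getLast]
  have hplen : p.length = l.length := by
    rw [length_ofChain, List.length_dropLast]
    omega
  have hnd' : p.support.Nodup := by rw [hsup]; exact hnd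
  have hpath : p.IsPath := by rw [Walk.isPath_def]; exact hnd'
  refine ⟨l.getLast hne, Walk.cons hcl p, ?_, ?_⟩
  · rw [Walk.cons_isCycle_iff]
    exact ⟨hpath, closing_edge_not_mem p hnd' (by omega)⟩
  · rw [Walk.length_cons, hplen]

lemma hasCycleLen_of_fn (G : SimpleGraph V) (c : ℕ → V) (k : ℕ) (h3 : 3 ≤ k)
    (hadj : ∀ i, i + 1 < k → G.Adj (c i) (c (i + 1)))
    (hcl : G.Adj (c (k - 1)) (c 0))
    (hinj : ∀ i < k, ∀ j < k, c i = c j → i = j) :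
    HasCycleLen G k := by
  have hll : ((List.range (k-1)).map (fun i => c (i+1))).length = k - 1 := by simp
  have hget : ∀ (i : ℕ) (h : i < k - 1),
      ((List.range (k-1)).map (fun i => c (i+1)))[i]'(by simpa using h) = c (i+1) := by
    intro i h; simp
  have hnd : (c 0 :: (List.range (k-1)).map (fun i => c (i+1))).Nodup := by
    rw [List.nodup_cons]
    constructor
    · simp only [List.mem_map, List.mem_range]
      rintro ⟨i, hi, hci⟩
      have := hinj (i+1) (by omega) 0 (by omega) hci
      omega
    · refine List.Nodup.map_on ?_ (List.nodup_range)
      intro x hx y hy hxy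
      simp only [List.mem_range] at hx hy
      have := hinj (x+1) (by omega) (y+1) (by omega) hxy
      omega
  have hch : List.Chain G.Adj (c 0) ((List.range (k-1)).map (fun i => c (i+1))) := by
    change List.IsChain G.Adj (c 0 :: _)
    rw [List.isChain_iff_getElem]
    intro i hi
    simp only [List.length_cons, List.length_map, List.length_range] at hi
    cases i with
    | zero => simpa using hadj 0 (by omega)
    | succ i => simpa using hadj (i+1) (by omega)
  have hlast : ((List.range (k-1)).map (fun i => c (i+1))).getLast
      (by rintro h; rw [h] at hll; simp at hll; omega) = c (k-1) := by
    rw [List.getLast_eq_getElem]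
    have h2 : k - 1 - 1 < k - 1 := by omega
    rw [hget _ (by simpa [hll] using h2)]
    congr 1
    omega
  have := hasCycleLen_of_list G (c 0) ((List.range (k-1)).map (fun i => c (i+1)))
    hnd (by rw [hll]; omega) hch (by rw [hlast]; exact hcl)
  rwa [hll, Nat.sub_add_cancel (by omega)] at this

lemma support_getElem_eq_getVert {G : SimpleGraph V} :
    ∀ {u v : V} (p : G.Walk u v) (i : ℕ) (h : i ≤ p.length),
    p.support[i]'(by rw [Walk.length_support]; omega) = p.getVert i := by
  intro u v p
  induction p with
  | nil =>
    intro i h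
    have : i = 0 := by simpa using h
    subst this
    simp [Walk.getVert]
  | cons hadj q ih =>
    intro i h
    cases i with
    | zero => simp [Walk.getVert]
    | succ i =>
      rw [Walk.length_cons] at h
      simpa [Walk.support_cons, Walk.getVert_cons_succ] using ih i (by omega)

lemma exists_lab [Fintype V] [DecidableEq V] (G : SimpleGraph V) (m : ℕ)
    (hm : Fintype.card V = m) (hm0 : 3 ≤ m)
    (hham : ∃ (v : V) (w : G.Walk v v), w.IsHamiltonianCycle) :
    ∃ e : ZMod m → V, Function.Injective e ∧ ∀ i : ZMod m, G.Adj (e i) (e (i + 1)) := by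
  obtain ⟨v, w, hw⟩ := hham
  have : NeZero m := ⟨by omega⟩
  have hlen : w.length = m := by rw [hw.length_eq, hm]
  have h0m : w.getVert 0 = w.getVert m := by
    rw [← hlen, Walk.getVert_length, Walk.getVert_zero]
  have hinj : ∀ i < m, ∀ j < m, w.getVert i = w.getVert j → i = j := by
    have hnd := hw.isCycle.support_nodup
    have htl : w.support.tail.length = m := by
      have h1 := w.length_support
      rw [hlen] at h1
      rw [List.length_tail, h1]; omega
    have hgv : ∀ i, 1 ≤ i → i ≤ m → w.getVert i = w.support.tail.getD (i - 1) v := by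
      intro i h1 h2
      have hb : i - 1 < w.support.tail.length := by omega
      rw [List.getD_eq_getElem _ _ hb]
      have hs := support_getElem_eq_getVert w i (by omega)
      rw [← hs, List.getElem_tail]
      congr 1
      omega
    intro i hi j hj hij
    set I : ℕ → ℕ := fun i => if i = 0 then m else i with hI
    have hgv' : ∀ i < m, w.getVert i = w.support.tail.getD (I i - 1) v := by
      intro i hi
      by_cases h0 : i = 0
      · subst h0
        rw [h0m]
        simp only [hI, if_pos rfl]
        exact hgv m (by omega) le_rfl
      · simp only [hI, if_neg h0]
        exact hgv i (by omega) (by omega)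
    rw [hgv' i hi, hgv' j hj] at hij
    have hbi : I i - 1 < w.support.tail.length := by simp only [hI]; split <;> omega
    have hbj : I j - 1 < w.support.tail.length := by simp only [hI]; split <;> omega
    rw [List.getD_eq_getElem _ _ hbi, List.getD_eq_getElem _ _ hbj] at hij
    have := (hnd.getElem_inj_iff).mp hij
    simp only [hI] at this
    split_ifs at this <;> omega
  refine ⟨fun i => w.getVert i.val, ?_, ?_⟩
  · intro i j hij
    have := hinj i.val (ZMod.val_lt i) j.val (ZMod.val_lt j) hij
    exact ZMod.val_injective m this
  · intro i
    show G.Adj (w.getVert i.val) (w.getVert (i + 1).val)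
    have hv1 : (i + 1).val = (i.val + 1) % m := by
      have h2 : ((i.val + 1 : ℕ) : ZMod m) = i + 1 := by
        push_cast
        simp [ZMod.natCast_val, ZMod.cast_id]
      rw [← h2, ZMod.val_natCast]
    by_cases hc : i.val + 1 < m
    · rw [hv1, Nat.mod_eq_of_lt hc]
      exact w.adj_getVert_succ (by omega)
    · have hiv : i.val = m - 1 := by have := ZMod.val_lt i; omega
      have h0 : (i + 1).val = 0 := by
        rw [hv1, hiv]
        have hmm : m - 1 + 1 = m := by omega
        rw [hmm, Nat.mod_self]
      have h3 := w.adj_getVert_succ (i := m - 1) (by rw [hlen]; omega)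
      have h4 : w.getVert (m - 1 + 1) = w.getVert 0 := by
        have hmm : m - 1 + 1 = m := by omega
        rw [hmm, ← h0m]
      rw [h4] at h3
      rw [h0, hiv]
      exact h3

section Lab

variable {m : ℕ}

lemma natCast_zmod_inj {a b : ℕ} (ha : a < m) (hb : b < m) (h : (a : ZMod m) = b) : a = b := by
  have := congrArg ZMod.val h
  rwa [ZMod.val_natCast_of_lt ha, ZMod.val_natCast_of_lt hb] at this

lemma natCast_zmod_sub (k : ℕ) (hk : k ≤ m) : ((m - k : ℕ) : ZMod m) = -(k : ℕ) := by
  have : ((m - k : ℕ) : ZMod m) + (k : ℕ) = ((m - k + k : ℕ) : ZMod m) := by push_cast; ring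
  rw [Nat.sub_add_cancel hk] at this
  have hm : ((m : ℕ) : ZMod m) = 0 := ZMod.natCast_self m
  linear_combination this + hm

/-- A cyclic labeling of the vertices realizing a Hamiltonian cycle. -/
def IsLab (G : SimpleGraph V) (m : ℕ) (e : ZMod m → V) : Prop :=
  Function.Injective e ∧ ∀ i : ZMod m, G.Adj (e i) (e (i + 1))

lemma IsLab.rot {G : SimpleGraph V} {e : ZMod m → V} (hl : IsLab G m e) (t : ZMod m) :
    IsLab G m (fun i => e (i + t)) := by
  refine ⟨fun a b h => by simpa using hl.1 h, fun i => ?_⟩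
  have := hl.2 (i + t)
  simpa [add_right_comm] using this

lemma IsLab.refl {G : SimpleGraph V} {e : ZMod m → V} (hl : IsLab G m e) (t : ZMod m) :
    IsLab G m (fun i => e (t - i)) := by
  refine ⟨fun a b h => by simpa [sub_right_injective.eq_iff] using hl.1 h, fun i => ?_⟩
  have := (hl.2 (t - (i + 1))).symm
  have harith : t - (i + 1) + 1 = t - i := by ring
  rwa [harith] at this

lemma lemA0 {G : SimpleGraph V} {e : ZMod m → V} (hl : IsLab G m e) (hm4 : 4 ≤ m)
    (hG : ¬ HasCycleLen G (m - 1)) : ¬ G.Adj (e 0) (e 2) := by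
  intro hadj
  apply hG
  have hk := hasCycleLen_of_fn G
    (fun i => if i = 0 then e 0 else e ((i + 1 : ℕ) : ZMod m)) (m - 1)
    (by omega) ?_ ?_ ?_
  · exact hk
  · intro i hi
    by_cases h0 : i = 0
    · subst h0
      simp only [if_pos rfl, if_neg one_ne_zero]
      have : ((2 : ℕ) : ZMod m) = 2 := by push_cast; rfl
      rw [show (1 + 1 : ℕ) = 2 from rfl, this]
      exact hadj
    · simp only [if_neg h0, if_neg (by omega : i + 1 ≠ 0)]
      have := hl.2 ((i + 1 : ℕ) : ZMod m)
      have harith : ((i + 1 : ℕ) : ZMod m) + 1 = ((i + 1 + 1 : ℕ) : ZMod m) := by push_cast; ring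
      rwa [harith] at this
  · simp only [if_neg (by omega : m - 1 - 1 ≠ 0), if_pos rfl]
    have := hl.2 ((m - 1 - 1 + 1 : ℕ) : ZMod m)
    have harith : ((m - 1 - 1 + 1 : ℕ) : ZMod m) + 1 = 0 := by
      have h1 : m - 1 - 1 + 1 + 1 = m := by omega
      have : ((m - 1 - 1 + 1 : ℕ) : ZMod m) + 1 = ((m - 1 - 1 + 1 + 1 : ℕ) : ZMod m) := by
        push_cast; ring
      rw [this, h1, ZMod.natCast_self]
    rwa [harith] at this
  · intro i hi j hj hij
    by_cases h0 : i = 0 <;> by_cases h1 : j = 0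
    · omega
    · subst h0
      simp only [if_pos rfl, if_neg h1] at hij
      have := hl.1 hij
      have h2 := natCast_zmod_inj (show 0 < m by omega) (show j + 1 < m by omega)
        (by simpa using this)
      omega
    · subst h1
      simp only [if_pos rfl, if_neg h0] at hij
      have := hl.1 hij.symm
      have h2 := natCast_zmod_inj (show 0 < m by omega) (show i + 1 < m by omega)
        (by simpa using this)
      omega
    · simp only [if_neg h0, if_neg h1] at hij
      have := natCast_zmod_inj (show i + 1 < m by omega) (show j + 1 < m by omega) (hl.1 hij)
      omega

lemma lemA {G : SimpleGraph V} {e : ZMod m → V} (hl : IsLab G m e) (hm4 : 4 ≤ m)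
    (hG : ¬ HasCycleLen G (m - 1)) (i : ZMod m) : ¬ G.Adj (e i) (e (i + 2)) := by
  have := lemA0 (hl.rot i) hm4 hG
  simpa [add_comm] using this

lemma lemB0 {G : SimpleGraph V} {e : ZMod m → V} (hl : IsLab G m e) {d : ℕ}
    (hd4 : 4 ≤ d) (hdm : d + 4 ≤ m) (hG : ¬ HasCycleLen G (m - 1))
    (h1 : G.Adj (e 0) (e (d : ℕ))) (h2 : G.Adj (e ((2 : ℕ) : ZMod m)) (e ((d + 1 : ℕ) : ZMod m))) :
    False := by
  set ν : ℕ → ℕ := fun i => if i = 0 then 0 else if i ≤ d - 1 then d + 1 - i else i + 1 with hν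
  have hv0 : ν 0 = 0 := by simp [hν]
  have hvA : ∀ i, 1 ≤ i → i ≤ d - 1 → ν i = d + 1 - i := by
    intro i ha hb
    simp only [hν]
    rw [if_neg (by omega), if_pos hb]
  have hvB : ∀ i, d ≤ i → ν i = i + 1 := by
    intro i ha
    simp only [hν]
    rw [if_neg (by omega), if_neg (by omega)]
  have hνlt : ∀ i, i < m - 1 → ν i < m := by
    intro i hi
    simp only [hν]
    split_ifs <;> omega
  apply hG
  have hk := hasCycleLen_of_fn G (fun i => e ((ν i : ℕ) : ZMod m)) (m - 1)
    (by omega) ?_ ?_ ?_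
  · exact hk
  · intro i hi
    show G.Adj (e ((ν i : ℕ) : ZMod m)) (e ((ν (i + 1) : ℕ) : ZMod m))
    rcases Nat.lt_or_ge i 1 with h | h
    · have hi0 : i = 0 := by omega
      subst hi0
      rw [hv0, hvA 1 le_rfl (by omega)]
      have : d + 1 - 1 = d := by omega
      rw [this]
      simpa using h1
    · rcases Nat.lt_or_ge i (d - 1) with h' | h'
      · rw [hvA i h (by omega), hvA (i + 1) (by omega) (by omega)]
        have := (hl.2 ((d - i : ℕ) : ZMod m)).symm
        have harith : ((d - i : ℕ) : ZMod m) + 1 = ((d + 1 - i : ℕ) : ZMod m) := by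
          have : d + 1 - i = (d - i) + 1 := by omega
          rw [this]; push_cast; ring
        rw [harith] at this
        have harith2 : d + 1 - (i + 1) = d - i := by omega
        rwa [harith2]
      · rcases Nat.lt_or_ge i d with h'' | h''
        · have hid : i = d - 1 := by omega
          subst hid
          rw [hvA (d - 1) h le_rfl, hvB (d - 1 + 1) (by omega)]
          have harith : d + 1 - (d - 1) = 2 := by omega
          have harith2 : d - 1 + 1 + 1 = d + 1 := by omega
          rw [harith, harith2]
          exact h2
        · rw [hvB i h'', hvB (i + 1) (by omega)]
          have := hl.2 ((i + 1 : ℕ) : ZMod m)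
          have harith : ((i + 1 : ℕ) : ZMod m) + 1 = ((i + 1 + 1 : ℕ) : ZMod m) := by
            push_cast; ring
          rwa [harith] at this
  · show G.Adj (e ((ν (m - 1 - 1) : ℕ) : ZMod m)) (e ((ν 0 : ℕ) : ZMod m))
    rw [hv0]
    have hm1 : m - 1 - 1 = m - 2 := by omega
    rw [hm1, hvB (m - 2) (by omega)]
    have := hl.2 ((m - 2 + 1 : ℕ) : ZMod m)
    have harith : ((m - 2 + 1 : ℕ) : ZMod m) + 1 = ((0 : ℕ) : ZMod m) := by
      have h1 : ((m - 2 + 1 : ℕ) : ZMod m) + 1 = ((m - 2 + 1 + 1 : ℕ) : ZMod m) := by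
        push_cast; ring
      have h2 : m - 2 + 1 + 1 = m := by omega
      rw [h1, h2, ZMod.natCast_self]
      simp
    rw [harith] at this
    simpa using this
  · intro i hi j hj hij
    have := natCast_zmod_inj (hνlt i hi) (hνlt j hj) (hl.1 hij)
    simp only [hν] at this
    split_ifs at this <;> omega

lemma cast_parity {a b : ℕ} (hm2 : 2 ∣ m) (h : (a : ZMod m) = (b : ZMod m)) :
    a % 2 = b % 2 := by
  have h2 := congrArg (ZMod.castHom hm2 (ZMod 2)) h
  rw [map_natCast, map_natCast] at h2
  have ha : ((a % 2 : ℕ) : ZMod 2) = ((b % 2 : ℕ) : ZMod 2) := by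
    rw [ZMod.natCast_mod, ZMod.natCast_mod]; exact h2
  exact natCast_zmod_inj (Nat.mod_lt _ (by omega)) (Nat.mod_lt _ (by omega)) ha

lemma compl_adj_of_dist2 {G : SimpleGraph V} {e : ZMod m → V} (hl : IsLab G m e) (hm4 : 4 ≤ m)
    (hG : ¬ HasCycleLen G (m - 1)) (i : ZMod m) : Gᶜ.Adj (e i) (e (i + 2)) := by
  rw [SimpleGraph.compl_adj]
  refine ⟨fun h => ?_, lemA hl hm4 hG i⟩
  have := hl.1 h
  have h2 : (2 : ZMod m) = ((2 : ℕ) : ZMod m) := by push_cast; rfl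
  have h0 : ((2 : ℕ) : ZMod m) = ((0 : ℕ) : ZMod m) := by
    have := (left_eq_add.mp this)
    rw [h2] at this
    simpa using this
  have := natCast_zmod_inj (show 2 < m by omega) (show 0 < m by omega) h0
  omega

lemma lemI0 {n : ℕ} {G : SimpleGraph V} {e : ZMod m → V} (hm : m = 2 * n) (hn : 2 ≤ n)
    (hl : IsLab G m e) (hG : ¬ HasCycleLen G (m - 1)) (hGc : ¬ HasCycleLen Gᶜ (m - 1))
    {d : ℕ} (hd2 : 2 ≤ d) (hde : d % 2 = 0) (hdm : d ≤ m - 2) :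
    ¬ G.Adj (e 0) (e (d : ℕ)) := by
  intro hadj
  have hm4 : 4 ≤ m := by omega
  by_cases hc2 : d = 2
  · subst hc2
    have := lemA0 hl hm4 hG
    have h2 : ((2 : ℕ) : ZMod m) = 2 := by push_cast; rfl
    rw [h2] at hadj
    exact this hadj
  by_cases hcm2 : d = m - 2
  · subst hcm2
    have := lemA hl hm4 hG ((m - 2 : ℕ) : ZMod m)
    have h2 : ((m - 2 : ℕ) : ZMod m) + 2 = 0 := by
      rw [natCast_zmod_sub 2 (by omega)]
      push_cast
      ring
    rw [h2] at this
    exact this hadj.symm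
  -- now 4 ≤ d ≤ m - 4
  have hd4 : 4 ≤ d := by omega
  have hdm4 : d + 4 ≤ m := by omega
  have hn4 : 4 ≤ n := by omega
  have hB1 : ¬ G.Adj (e ((2 : ℕ) : ZMod m)) (e ((d + 1 : ℕ) : ZMod m)) :=
    fun h => lemB0 hl hd4 (by omega) hG hadj h
  have hB2 : ¬ G.Adj (e ((m - 2 : ℕ) : ZMod m)) (e ((d - 1 : ℕ) : ZMod m)) := by
    intro h
    have hrl := hl.refl 0
    apply lemB0 hrl (d := m - d) (by omega) (by omega) hG
    · show G.Adj (e (0 - 0)) (e (0 - ((m - d : ℕ) : ZMod m)))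
      rw [natCast_zmod_sub d (by omega)]
      simpa using hadj
    · show G.Adj (e (0 - ((2 : ℕ) : ZMod m))) (e (0 - ((m - d + 1 : ℕ) : ZMod m)))
      have e1 : (0 : ZMod m) - ((2 : ℕ) : ZMod m) = ((m - 2 : ℕ) : ZMod m) := by
        rw [natCast_zmod_sub 2 (by omega)]; ring
      have e2 : (0 : ZMod m) - ((m - d + 1 : ℕ) : ZMod m) = ((d - 1 : ℕ) : ZMod m) := by
        have h3 : m - d + 1 = m - (d - 1) := by omega
        rw [h3, natCast_zmod_sub (d - 1) (by omega)]
        ring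
      rw [e1, e2]
      exact h
  -- build the (m-1)-cycle in Gᶜ
  apply hGc
  have hA2 := compl_adj_of_dist2 hl hm4 hG
  set D := d - 1 with hD
  have hDo : D % 2 = 1 := by omega
  set ω : ℕ → ℕ := fun t => if t = 0 then 2 else if t ≤ n then D + 2 * t else m - 2 * (t - n)
    with hω
  have hw0 : ω 0 = 2 := by simp [hω]
  have hwA : ∀ t, 1 ≤ t → t ≤ n → ω t = D + 2 * t := by
    intro t h1 h2
    simp only [hω]
    rw [if_neg (by omega), if_pos h2]
  have hwB : ∀ t, n + 1 ≤ t → ω t = m - 2 * (t - n) := by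
    intro t h1
    simp only [hω]
    rw [if_neg (by omega), if_neg (by omega)]
  have hcastn : ((D + 2 * n : ℕ) : ZMod m) = ((D : ℕ) : ZMod m) := by
    have h3 : D + 2 * n = D + m := by omega
    rw [h3]
    push_cast [ZMod.natCast_self]
    ring
  have hk := hasCycleLen_of_fn Gᶜ (fun i => e ((ω i : ℕ) : ZMod m)) (m - 1)
    (by omega) ?_ ?_ ?_
  · exact hk
  · intro i hi
    show Gᶜ.Adj (e ((ω i : ℕ) : ZMod m)) (e ((ω (i + 1) : ℕ) : ZMod m))
    by_cases h0 : i = 0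
    · subst h0
      rw [hw0, hwA 1 le_rfl (by omega)]
      have harith : D + 2 * 1 = d + 1 := by omega
      rw [harith, SimpleGraph.compl_adj]
      refine ⟨fun h => ?_, hB1⟩
      have := cast_parity ⟨n, hm⟩ (hl.1 h)
      omega
    · by_cases h1 : i ≤ n - 1
      · rw [hwA i (by omega) (by omega), hwA (i + 1) (by omega) (by omega)]
        have := hA2 ((D + 2 * i : ℕ) : ZMod m)
        have harith : ((D + 2 * i : ℕ) : ZMod m) + 2 = ((D + 2 * (i + 1) : ℕ) : ZMod m) := by
          push_cast; ring
        rwa [harith] at this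
      · by_cases h2 : i = n
        · rw [h2, hwA n (by omega) le_rfl, hwB (n + 1) le_rfl]
          have h3 : n + 1 - n = 1 := by omega
          rw [h3, hcastn, SimpleGraph.compl_adj]
          constructor
          · intro h
            have := cast_parity ⟨n, hm⟩ (hl.1 h)
            omega
          · intro h
            exact hB2 h.symm
        · rw [hwB i (by omega), hwB (i + 1) (by omega)]
          have := (hA2 ((m - 2 * (i + 1 - n) : ℕ) : ZMod m)).symm
          have harith : ((m - 2 * (i + 1 - n) : ℕ) : ZMod m) + 2
              = ((m - 2 * (i - n) : ℕ) : ZMod m) := by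
            have h3 : m - 2 * (i - n) = m - 2 * (i + 1 - n) + 2 := by omega
            rw [h3]; push_cast; ring
          rwa [harith] at this
  · show Gᶜ.Adj (e ((ω (m - 1 - 1) : ℕ) : ZMod m)) (e ((ω 0 : ℕ) : ZMod m))
    rw [hw0]
    have h3 : m - 1 - 1 = m - 2 := by omega
    rw [h3, hwB (m - 2) (by omega)]
    have h4 : m - 2 * (m - 2 - n) = 4 := by omega
    rw [h4]
    have := hA2 ((2 : ℕ) : ZMod m)
    have harith : ((2 : ℕ) : ZMod m) + 2 = ((4 : ℕ) : ZMod m) := by push_cast; ring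
    rw [harith] at this
    exact this.symm
  · intro i hi j hj hij
    have hcast := hl.1 hij
    have hreg : ∀ t, t < m - 1 → t ≠ 0 → (1 ≤ t ∧ t ≤ n) ∨ (n + 1 ≤ t ∧ t ≤ m - 2) := by
      intro t h1 h2
      omega
    by_cases h0i : i = 0 <;> by_cases h0j : j = 0
    · omega
    · subst h0i
      rcases hreg j hj h0j with hJ | hJ
      · rw [hw0, hwA j hJ.1 hJ.2] at hcast
        have := cast_parity ⟨n, hm⟩ hcast
        omega
      · rw [hw0, hwB j hJ.1] at hcast
        have := natCast_zmod_inj (show 2 < m by omega)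
          (show m - 2 * (j - n) < m by omega) hcast
        omega
    · subst h0j
      rcases hreg i hi h0i with hI | hI
      · rw [hw0, hwA i hI.1 hI.2] at hcast
        have := cast_parity ⟨n, hm⟩ hcast.symm
        omega
      · rw [hw0, hwB i hI.1] at hcast
        have := natCast_zmod_inj (show 2 < m by omega)
          (show m - 2 * (i - n) < m by omega) hcast.symm
        omega
    · rcases hreg i hi h0i with hI | hI <;> rcases hreg j hj h0j with hJ | hJ
      · rw [hwA i hI.1 hI.2, hwA j hJ.1 hJ.2] at hcast
        have h2 : ((2 * i : ℕ) : ZMod m) = ((2 * j : ℕ) : ZMod m) := by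
          push_cast at hcast ⊢
          linear_combination hcast
        by_cases hin : i = n <;> by_cases hjn : j = n
        · omega
        · exfalso
          rw [hin] at h2
          have hzn : ((2 * n : ℕ) : ZMod m) = ((0 : ℕ) : ZMod m) := by
            rw [← hm, ZMod.natCast_self]
            simp
          rw [hzn] at h2
          have := natCast_zmod_inj (show 0 < m by omega)
            (show 2 * j < m by omega) h2
          omega
        · exfalso
          rw [hjn] at h2
          have hzn : ((2 * n : ℕ) : ZMod m) = ((0 : ℕ) : ZMod m) := by
            rw [← hm, ZMod.natCast_self]
            simp
          rw [hzn] at h2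
          have := natCast_zmod_inj (show 2 * i < m by omega)
            (show 0 < m by omega) h2
          omega
        · have := natCast_zmod_inj (show 2 * i < m by omega)
            (show 2 * j < m by omega) h2
          omega
      · rw [hwA i hI.1 hI.2, hwB j hJ.1] at hcast
        have := cast_parity ⟨n, hm⟩ hcast
        omega
      · rw [hwB i hI.1, hwA j hJ.1 hJ.2] at hcast
        have := cast_parity ⟨n, hm⟩ hcast
        omega
      · rw [hwB i hI.1, hwB j hJ.1] at hcast
        have := natCast_zmod_inj (show m - 2 * (i - n) < m by omega)
          (show m - 2 * (j - n) < m by omega) hcast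
        omega

lemma lemI {n : ℕ} {G : SimpleGraph V} {e : ZMod m → V} (hm : m = 2 * n) (hn : 2 ≤ n)
    (hl : IsLab G m e) (hG : ¬ HasCycleLen G (m - 1)) (hGc : ¬ HasCycleLen Gᶜ (m - 1))
    (i j : ZMod m) (hne : i ≠ j) (hpar : (i.val + j.val) % 2 = 0) :
    ¬ G.Adj (e i) (e j) := by
  have hm0 : m ≠ 0 := by omega
  have hnz : NeZero m := ⟨hm0⟩
  set d := (j - i).val with hd
  have hdc : ((d : ℕ) : ZMod m) = j - i := ZMod.natCast_rightInverse (j - i)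
  have hd0 : d ≠ 0 := by
    intro h
    apply hne
    have : j - i = 0 := by rwa [ZMod.val_eq_zero] at h
    have := sub_eq_zero.mp this
    exact this.symm
  have hdpar : d % 2 = 0 := by
    have hφ := congrArg (ZMod.castHom ⟨n, hm⟩ (ZMod 2)) hdc
    rw [map_natCast, map_sub] at hφ
    have hvi : (ZMod.castHom (⟨n, hm⟩ : (2:ℕ) ∣ m) (ZMod 2)) i = ((i.val : ℕ) : ZMod 2) := by
      rw [ZMod.castHom_apply, ← ZMod.natCast_val]
    have hvj : (ZMod.castHom (⟨n, hm⟩ : (2:ℕ) ∣ m) (ZMod 2)) j = ((j.val : ℕ) : ZMod 2) := by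
      rw [ZMod.castHom_apply, ← ZMod.natCast_val]
    rw [hvi, hvj] at hφ
    -- hφ : (d : ZMod 2) = j.val - i.val
    have hsum : ((i.val + j.val : ℕ) : ZMod 2) = 0 := by
      have : ((i.val + j.val : ℕ) : ZMod 2) = (((i.val + j.val) % 2 : ℕ) : ZMod 2) := by
        rw [ZMod.natCast_mod]
      rw [this, hpar]
      simp
    have hd2 : ((d : ℕ) : ZMod 2) = 0 := by
      push_cast at hsum ⊢
      have h22 : (2 : ZMod 2) = 0 := rfl
      linear_combination hφ + hsum - ((i.val : ZMod 2)) * h22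
    have : ((d % 2 : ℕ) : ZMod 2) = ((0 : ℕ) : ZMod 2) := by
      rw [ZMod.natCast_mod]
      simpa using hd2
    have := natCast_zmod_inj (Nat.mod_lt _ (by omega)) (by omega) this
    omega
  have hdlt : d < m := ZMod.val_lt _
  have hd2 : 2 ≤ d := by omega
  have hdm2 : d ≤ m - 2 := by
    rcases Nat.lt_or_ge d (m - 1) with h | h
    · omega
    · exfalso
      have : d = m - 1 := by omega
      omega
  intro hadj
  exact lemI0 hm hn (hl.rot i) hG hGc hd2 hdpar hdm2 (by
    show G.Adj (e (0 + i)) (e (((d : ℕ) : ZMod m) + i))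
    rw [zero_add, hdc, sub_add_cancel]
    exact hadj)

lemma val_add_parity {n : ℕ} (hm : m = 2 * n) (hn : 1 ≤ n) (i j : ZMod m) :
    (i + j).val % 2 = (i.val + j.val) % 2 := by
  have hnz : NeZero m := ⟨by omega⟩
  set φ := ZMod.castHom (⟨n, hm⟩ : (2:ℕ) ∣ m) (ZMod 2) with hφ
  have hv : ∀ x : ZMod m, φ x = ((x.val : ℕ) : ZMod 2) := by
    intro x
    rw [hφ, ZMod.castHom_apply, ← ZMod.natCast_val]
  have h1 : ((((i + j).val) % 2 : ℕ) : ZMod 2) = (((i.val + j.val) % 2 : ℕ) : ZMod 2) := by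
    rw [ZMod.natCast_mod, ZMod.natCast_mod, ← hv (i + j), map_add, hv i, hv j]
    push_cast
    ring
  exact natCast_zmod_inj (Nat.mod_lt _ (by omega)) (Nat.mod_lt _ (by omega)) h1

lemma lemII {n : ℕ} {G : SimpleGraph V} {e : ZMod m → V} (hm : m = 2 * n) (hn : 3 ≤ n)
    (hl : IsLab G m e) (hG : ¬ HasCycleLen G (m - 1)) (hGc : ¬ HasCycleLen Gᶜ (m - 1))
    {a c b d : ZMod m}
    (hao : a.val % 2 = 1) (hco : c.val % 2 = 1) (hbe : b.val % 2 = 0) (hde : d.val % 2 = 0)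
    (hac : a ≠ c) (hbd : b ≠ d)
    (h1 : ¬ G.Adj (e a) (e b)) (h2 : ¬ G.Adj (e c) (e d)) : False := by
  have hm0 : m ≠ 0 := by omega
  have hnz : NeZero m := ⟨hm0⟩
  have hn2 : 2 ≤ n := by omega
  -- complement adjacency helpers
  have hPsame : ∀ x y : ZMod m, x.val % 2 = y.val % 2 → x ≠ y → Gᶜ.Adj (e x) (e y) := by
    intro x y hp hxy
    rw [SimpleGraph.compl_adj]
    exact ⟨fun h => hxy (hl.1 h), lemI hm hn2 hl hG hGc x y hxy (by omega)⟩
  have hxab : a ≠ b := fun h => by rw [h] at hao; omega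
  have hxcd : c ≠ d := fun h => by rw [h] at hco; omega
  have hcross1 : Gᶜ.Adj (e a) (e b) := by
    rw [SimpleGraph.compl_adj]
    exact ⟨fun h => hxab (hl.1 h), h1⟩
  have hcross2 : Gᶜ.Adj (e d) (e c) := by
    rw [SimpleGraph.compl_adj]
    exact ⟨fun h => hxcd (hl.1 h).symm, fun h => h2 h.symm⟩
  -- odd and even index lists
  set oddsL : List (ZMod m) := (List.range n).map (fun t => ((2 * t + 1 : ℕ) : ZMod m))
    with hoddsL
  set evensL : List (ZMod m) := (List.range n).map (fun t => ((2 * t : ℕ) : ZMod m))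
    with hevensL
  have hoddval : ∀ t, t < n → ((2 * t + 1 : ℕ) : ZMod m).val = 2 * t + 1 := by
    intro t ht
    exact ZMod.val_natCast_of_lt (by omega)
  have hevenval : ∀ t, t < n → ((2 * t : ℕ) : ZMod m).val = 2 * t := by
    intro t ht
    exact ZMod.val_natCast_of_lt (by omega)
  have hoddmem : ∀ x : ZMod m, x ∈ oddsL ↔ x.val % 2 = 1 := by
    intro x
    constructor
    · intro hx
      rw [hoddsL] at hx
      simp only [List.mem_map, List.mem_range] at hx
      obtain ⟨t, ht, rfl⟩ := hx
      rw [hoddval t ht]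
      omega
    · intro hx
      rw [hoddsL]
      simp only [List.mem_map, List.mem_range]
      refine ⟨x.val / 2, by have := ZMod.val_lt x; omega, ?_⟩
      have hv : 2 * (x.val / 2) + 1 = x.val := by omega
      rw [hv]
      exact ZMod.natCast_rightInverse x
  have hevenmem : ∀ x : ZMod m, x ∈ evensL ↔ x.val % 2 = 0 := by
    intro x
    constructor
    · intro hx
      rw [hevensL] at hx
      simp only [List.mem_map, List.mem_range] at hx
      obtain ⟨t, ht, rfl⟩ := hx
      rw [hevenval t ht]
      omega
    · intro hx
      rw [hevensL]
      simp only [List.mem_map, List.mem_range]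
      refine ⟨x.val / 2, by have := ZMod.val_lt x; omega, ?_⟩
      have hv : 2 * (x.val / 2) = x.val := by omega
      rw [hv]
      exact ZMod.natCast_rightInverse x
  have hoddnd : oddsL.Nodup := by
    rw [hoddsL]
    refine List.Nodup.map_on ?_ (List.nodup_range (n := n))
    intro x hx y hy hxy
    simp only [List.mem_range] at hx hy
    have := natCast_zmod_inj (show 2 * x + 1 < m by omega) (show 2 * y + 1 < m by omega) hxy
    omega
  have hevennd : evensL.Nodup := by
    rw [hevensL]
    refine List.Nodup.map_on ?_ (List.nodup_range (n := n))
    intro x hx y hy hxy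
    simp only [List.mem_range] at hx hy
    have := natCast_zmod_inj (show 2 * x < m by omega) (show 2 * y < m by omega) hxy
    omega
  have hoddlen : oddsL.length = n := by rw [hoddsL]; simp
  have hevenlen : evensL.length = n := by rw [hevensL]; simp
  -- the two blocks
  set Omid : List (ZMod m) := ((oddsL.erase a).erase c).tail with hOmid
  set Emid : List (ZMod m) := (evensL.erase b).erase d with hEmid
  have haodd : a ∈ oddsL := (hoddmem a).2 hao
  have hcodd : c ∈ oddsL := (hoddmem c).2 hco
  have hbeven : b ∈ evensL := (hevenmem b).2 hbe
  have hdeven : d ∈ evensL := (hevenmem d).2 hde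
  have hcmem' : c ∈ oddsL.erase a := (List.mem_erase_of_ne hac.symm).2 hcodd
  have hdmem' : d ∈ evensL.erase b := (List.mem_erase_of_ne hbd.symm).2 hdeven
  have hOlen : Omid.length = n - 3 := by
    rw [hOmid, List.length_tail, List.length_erase_of_mem hcmem',
      List.length_erase_of_mem haodd, hoddlen]
    omega
  have hElen : Emid.length = n - 2 := by
    rw [hEmid, List.length_erase_of_mem hdmem', List.length_erase_of_mem hbeven, hevenlen]
    omega
  have hOsub : ∀ x ∈ Omid, x ∈ oddsL ∧ x ≠ a ∧ x ≠ c := by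
    intro x hx
    rw [hOmid] at hx
    have hx1 := List.tail_sublist ((oddsL.erase a).erase c) |>.subset hx
    have hnd1 : (oddsL.erase a).Nodup := hoddnd.erase a
    have h3 := (List.Nodup.mem_erase_iff hnd1).1 hx1
    have h4 := (List.Nodup.mem_erase_iff hoddnd).1 h3.2
    exact ⟨h4.2, h4.1, h3.1⟩
  have hEsub : ∀ x ∈ Emid, x ∈ evensL ∧ x ≠ b ∧ x ≠ d := by
    intro x hx
    rw [hEmid] at hx
    have hnd1 : (evensL.erase b).Nodup := hevennd.erase b
    have h3 := (List.Nodup.mem_erase_iff hnd1).1 hx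
    have h4 := (List.Nodup.mem_erase_iff hevennd).1 h3.2
    exact ⟨h4.2, h4.1, h3.1⟩
  have hOnd : Omid.Nodup := by
    rw [hOmid]
    exact List.Nodup.sublist (List.tail_sublist _) ((hoddnd.erase a).erase c)
  have hEnd : Emid.Nodup := (hevennd.erase b).erase d
  -- blocks
  set L1 : List (ZMod m) := c :: (Omid ++ [a]) with hL1
  set L2 : List (ZMod m) := b :: (Emid ++ [d]) with hL2
  have hL1mem : ∀ x ∈ L1, x.val % 2 = 1 := by
    intro x hx
    rw [hL1] at hx
    rcases List.mem_cons.1 hx with rfl | hx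
    · exact hco
    · rcases List.mem_append.1 hx with hx | hx
      · exact (hoddmem x).1 (hOsub x hx).1
      · rw [List.mem_singleton.1 hx]; exact hao
  have hL2mem : ∀ x ∈ L2, x.val % 2 = 0 := by
    intro x hx
    rw [hL2] at hx
    rcases List.mem_cons.1 hx with rfl | hx
    · exact hbe
    · rcases List.mem_append.1 hx with hx | hx
      · exact (hevenmem x).1 (hEsub x hx).1
      · rw [List.mem_singleton.1 hx]; exact hde
  have hL1nd : L1.Nodup := by
    rw [hL1, List.nodup_cons]
    constructor
    · intro hx
      rcases List.mem_append.1 hx with hx | hx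
      · exact (hOsub c hx).2.2 rfl
      · exact hac (List.mem_singleton.1 hx).symm
    · rw [List.nodup_append]
      refine ⟨hOnd, List.nodup_singleton a, ?_⟩
      intro x hx y hx2 hxy
      rw [List.mem_singleton] at hx2
      subst hx2
      exact (hOsub x hx).2.1 hxy
  have hL2nd : L2.Nodup := by
    rw [hL2, List.nodup_cons]
    constructor
    · intro hx
      rcases List.mem_append.1 hx with hx | hx
      · exact (hEsub b hx).2.1 rfl
      · exact hbd (List.mem_singleton.1 hx)
    · rw [List.nodup_append]
      refine ⟨hEnd, List.nodup_singleton d, ?_⟩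
      intro x hx y hx2 hxy
      rw [List.mem_singleton] at hx2
      subst hx2
      exact (hEsub x hx).2.2 hxy
  have hchain1 : List.Chain' Gᶜ.Adj (L1.map e) := by
    refine (List.isChain_map e).2 ?_
    refine List.Pairwise.isChain ?_
    refine List.Pairwise.imp_of_mem ?_ hL1nd
    intro x y hx hy hxy
    exact hPsame x y (by rw [hL1mem x hx, hL1mem y hy]) hxy
  have hchain2 : List.Chain' Gᶜ.Adj (L2.map e) := by
    refine (List.isChain_map e).2 ?_
    refine List.Pairwise.isChain ?_
    refine List.Pairwise.imp_of_mem ?_ hL2nd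
    intro x y hx hy hxy
    exact hPsame x y (by rw [hL2mem x hx, hL2mem y hy]) hxy
  have hdisj : ∀ x ∈ L1, x ∉ L2 := by
    intro x hx hx2
    have := hL1mem x hx
    have := hL2mem x hx2
    omega
  have hFnd : (L1 ++ L2).Nodup := by
    rw [List.nodup_append]
    exact ⟨hL1nd, hL2nd, fun x hx y hy hxy => hdisj x hx (hxy ▸ hy)⟩
  have hglast : (L1.map e).getLast? = some (e a) := by
    rw [hL1, List.map_cons, List.map_append, List.map_singleton, ← List.cons_append,
      List.getLast?_concat]
  have hchainF : List.Chain' Gᶜ.Adj ((L1 ++ L2).map e) := by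
    rw [List.map_append]; refine List.isChain_append.2 ?_
    refine ⟨hchain1, hchain2, ?_⟩
    intro x hx y hy
    rw [hglast] at hx
    rw [hL2] at hy
    simp only [List.map_cons, List.head?_cons, Option.mem_some_iff] at hx hy
    subst hx
    subst hy
    exact hcross1
  -- assemble the cycle
  set rest : List (ZMod m) := (Omid ++ [a]) ++ L2 with hrest
  have hF : L1 ++ L2 = c :: rest := by rw [hL1, hrest, List.cons_append]
  have hrestlen : rest.length = m - 2 := by
    rw [hrest, hL2]
    simp only [List.length_append, List.length_cons, List.length_singleton, List.length_nil,
      hOlen, hElen]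
    omega
  have hndF : (e c :: rest.map e).Nodup := by
    have := hFnd.map hl.1
    rwa [hF, List.map_cons] at this
  have hchF : List.Chain Gᶜ.Adj (e c) (rest.map e) := by
    have := hchainF
    rw [hF, List.map_cons] at this
    exact this
  have hrestne : rest.map e ≠ [] := by
    intro h
    have := congrArg List.length h
    rw [List.length_map, hrestlen] at this
    simp at this
    omega
  have hlast : ∀ (h : rest.map e ≠ []), (rest.map e).getLast h = e d := by
    intro h
    have hsplit : rest = ((Omid ++ [a]) ++ (b :: Emid)) ++ [d] := by
      rw [hrest, hL2]
      simp [List.append_assoc]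
    have hq : (rest.map e).getLast? = some (e d) := by
      conv_lhs => rw [hsplit]
      rw [List.map_append, List.map_singleton, List.getLast?_concat]
    have hq2 := List.getLast?_eq_getLast (l := rest.map e) h
    rw [hq] at hq2
    exact (Option.some.inj hq2).symm
  apply hGc
  have hres := hasCycleLen_of_list Gᶜ (e c) (rest.map e) hndF
    (by rw [List.length_map, hrestlen]; omega) hchF
    (by rw [hlast]; exact hcross2)
  rw [List.length_map, hrestlen] at hres
  have hmm : m - 2 + 1 = m - 1 := by omega
  rwa [hmm] at hres

end Lab

end NoC


open NoC in
theorem hamiltonian_no_C_2n_sub_one {V : Type*} [Fintype V] [DecidableEq V]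
    (G : SimpleGraph V) (n : ℕ) (hcard : Fintype.card V = 2 * n)
    (hham : ∃ (v : V) (w : G.Walk v v), w.IsHamiltonianCycle)
    (hG : ¬ HasCycleLen G (2 * n - 1)) (hGc : ¬ HasCycleLen Gᶜ (2 * n - 1)) :
    ∃ U₁ U₂ : Finset V, Disjoint U₁ U₂ ∧ U₁ ∪ U₂ = univ ∧
      U₁.card = n ∧ U₂.card = n ∧
      (∀ u ∈ U₁, ∀ v ∈ U₁, ¬ G.Adj u v) ∧ (∀ u ∈ U₂, ∀ v ∈ U₂, ¬ G.Adj u v) ∧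
      ∃ u : V, Nonempty
        ((G.induce {x | x ≠ u}) ≃g completeBipartiteGraph (Fin n) (Fin (n - 1))) := by
  classical
  have hn2 : 2 ≤ n := by
    obtain ⟨v0, w0, hw0⟩ := hham
    have h3 := hw0.isCycle.three_le_length
    have := hw0.length_eq
    rw [hcard] at this
    omega
  have hnz : NeZero (2 * n) := ⟨by omega⟩
  obtain ⟨e, einj, eadj⟩ := NoC.exists_lab G (2 * n) hcard (by omega) hham
  have hl : IsLab G (2 * n) e := ⟨einj, eadj⟩
  -- star property for the complement cross edges
  have hstar : ∃ u₀ : ZMod (2 * n), ∀ x y : ZMod (2 * n), x.val % 2 = 1 → y.val % 2 = 0 →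
      ¬ G.Adj (e x) (e y) → (x = u₀ ∨ y = u₀) := by
    by_cases hn3 : 3 ≤ n
    · by_cases hex : ∃ x y : ZMod (2 * n), x.val % 2 = 1 ∧ y.val % 2 = 0 ∧ ¬ G.Adj (e x) (e y)
      · obtain ⟨a₀, b₀, ha₀, hb₀, hab₀⟩ := hex
        by_cases hall : ∀ x y : ZMod (2 * n), x.val % 2 = 1 → y.val % 2 = 0 →
            ¬ G.Adj (e x) (e y) → x = a₀
        · exact ⟨a₀, fun x y hx hy hxy => Or.inl (hall x y hx hy hxy)⟩
        · push_neg at hall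
          obtain ⟨c₀, d₀, hc₀, hd₀, hcd₀, hca⟩ := hall
          have hbd : b₀ = d₀ := by
            by_contra hne
            exact lemII rfl hn3 hl hG hGc ha₀ hc₀ hb₀ hd₀ (fun h => hca h.symm) hne hab₀ hcd₀
          subst hbd
          refine ⟨b₀, fun x y hx hy hxy => ?_⟩
          right
          by_contra hyb
          by_cases hxa : x = a₀
          · subst hxa
            exact lemII rfl hn3 hl hG hGc hc₀ hx hb₀ hy hca (fun h => hyb h.symm) hcd₀ hxy
          · exact lemII rfl hn3 hl hG hGc hx ha₀ hy hb₀ hxa hyb hxy hab₀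
      · exact ⟨0, fun x y hx hy hxy => absurd ⟨x, y, hx, hy, hxy⟩ hex⟩
    · -- n = 2 : every cross pair is adjacent
      have hn4 : n = 2 := by omega
      subst hn4
      refine ⟨0, fun x y hx hy hxy => absurd ?_ hxy⟩
      have hxv := ZMod.val_lt x
      have hyv := ZMod.val_lt y
      have hx' : ((x.val : ℕ) : ZMod (2 * 2)) = x := ZMod.natCast_rightInverse x
      have hy' : ((y.val : ℕ) : ZMod (2 * 2)) = y := ZMod.natCast_rightInverse y
      have hxc : x.val = 1 ∨ x.val = 3 := by omega
      have hyc : y.val = 0 ∨ y.val = 2 := by omega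
      have hcases : x = y + 1 ∨ y = x + 1 := by
        rcases hxc with h1 | h1 <;> rcases hyc with h2 | h2 <;>
          rw [← hx', ← hy', h1, h2] <;> [left; right; right; left] <;> decide
      rcases hcases with h | h
      · rw [h]
        exact (eadj y).symm
      · rw [h]
        exact eadj x
  obtain ⟨u₀, hstaru⟩ := hstar
  -- rotate the labeling so that the star center is at 0
  set q : ZMod (2 * n) → V := fun i => e (i + u₀) with hq
  have hl' : IsLab G (2 * n) q := hl.rot u₀
  have hInd : ∀ i j : ZMod (2 * n), i ≠ j → (i.val + j.val) % 2 = 0 → ¬ G.Adj (q i) (q j) :=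
    fun i j hne hp => lemI rfl hn2 hl' hG hGc i j hne hp
  have hH : ∀ i j : ZMod (2 * n), (i.val + j.val) % 2 = 1 → ¬ G.Adj (q i) (q j) →
      i = 0 ∨ j = 0 := by
    intro i j hp hnadj
    have hxp : (i + u₀).val % 2 = (i.val + u₀.val) % 2 := val_add_parity rfl (by omega) i u₀
    have hyp : (j + u₀).val % 2 = (j.val + u₀.val) % 2 := val_add_parity rfl (by omega) j u₀
    by_cases hx1 : (i + u₀).val % 2 = 1
    · have hy0 : (j + u₀).val % 2 = 0 := by omega
      rcases hstaru (i + u₀) (j + u₀) hx1 hy0 hnadj with h | h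
      · left; have := add_right_cancel (h.trans (zero_add u₀).symm); exact this
      · right; have := add_right_cancel (h.trans (zero_add u₀).symm); exact this
    · have hx0 : (i + u₀).val % 2 = 0 := by omega
      have hy1 : (j + u₀).val % 2 = 1 := by omega
      rcases hstaru (j + u₀) (i + u₀) hy1 hx0 (fun h => hnadj h.symm) with h | h
      · right; have := add_right_cancel (h.trans (zero_add u₀).symm); exact this
      · left; have := add_right_cancel (h.trans (zero_add u₀).symm); exact this
  have hbij : Function.Bijective q := by
    rw [Fintype.bijective_iff_injective_and_card]
    exact ⟨hl'.1, by rw [ZMod.card, hcard]⟩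
  -- value computations
  have hvlt : ∀ k : ℕ, k < 2 * n → (((k : ℕ) : ZMod (2 * n))).val = k :=
    fun k hk => ZMod.val_natCast_of_lt hk
  -- the partition
  set U₁ : Finset V := (Finset.range n).image (fun j => q ((2 * j + 1 : ℕ) : ZMod (2 * n)))
    with hU₁
  set U₂ : Finset V := (Finset.range n).image (fun j => q ((2 * j : ℕ) : ZMod (2 * n)))
    with hU₂
  have hmemU₁ : ∀ x, x ∈ U₁ ↔ ∃ i : ZMod (2 * n), i.val % 2 = 1 ∧ q i = x := by
    intro x
    rw [hU₁]
    simp only [Finset.mem_image, Finset.mem_range]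
    constructor
    · rintro ⟨j, hj, rfl⟩
      exact ⟨((2 * j + 1 : ℕ) : ZMod (2 * n)), by rw [hvlt _ (by omega)]; omega, rfl⟩
    · rintro ⟨i, hpar, rfl⟩
      have hiv := ZMod.val_lt i
      refine ⟨i.val / 2, by omega, ?_⟩
      congr 1
      have h2 : 2 * (i.val / 2) + 1 = i.val := by omega
      rw [h2]
      exact ZMod.natCast_rightInverse i
  have hmemU₂ : ∀ x, x ∈ U₂ ↔ ∃ i : ZMod (2 * n), i.val % 2 = 0 ∧ q i = x := by
    intro x
    rw [hU₂]
    simp only [Finset.mem_image, Finset.mem_range]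
    constructor
    · rintro ⟨j, hj, rfl⟩
      exact ⟨((2 * j : ℕ) : ZMod (2 * n)), by rw [hvlt _ (by omega)]; omega, rfl⟩
    · rintro ⟨i, hpar, rfl⟩
      have hiv := ZMod.val_lt i
      refine ⟨i.val / 2, by omega, ?_⟩
      congr 1
      have h2 : 2 * (i.val / 2) = i.val := by omega
      rw [h2]
      exact ZMod.natCast_rightInverse i
  have hdisj : Disjoint U₁ U₂ := by
    rw [Finset.disjoint_left]
    intro x hx1 hx2
    obtain ⟨i, hi, rfl⟩ := (hmemU₁ x).1 hx1
    obtain ⟨i', hi', he⟩ := (hmemU₂ _).1 hx2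
    have := hl'.1 he
    rw [this] at hi'
    omega
  have hunion : U₁ ∪ U₂ = Finset.univ := by
    apply Finset.eq_univ_of_forall
    intro x
    obtain ⟨i, rfl⟩ := hbij.2 x
    rw [Finset.mem_union]
    by_cases hp : i.val % 2 = 1
    · exact Or.inl ((hmemU₁ _).2 ⟨i, hp, rfl⟩)
    · exact Or.inr ((hmemU₂ _).2 ⟨i, by omega, rfl⟩)
  have hcard₁ : U₁.card = n := by
    rw [hU₁, Finset.card_image_of_injOn, Finset.card_range]
    intro x hx y hy hxy
    rw [Finset.mem_coe, Finset.mem_range] at hx hy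
    have := hl'.1 hxy
    have := natCast_zmod_inj (show 2 * x + 1 < 2 * n by omega)
      (show 2 * y + 1 < 2 * n by omega) this
    omega
  have hcard₂ : U₂.card = n := by
    rw [hU₂, Finset.card_image_of_injOn, Finset.card_range]
    intro x hx y hy hxy
    rw [Finset.mem_coe, Finset.mem_range] at hx hy
    have := hl'.1 hxy
    have := natCast_zmod_inj (show 2 * x < 2 * n by omega)
      (show 2 * y < 2 * n by omega) this
    omega
  have hind₁ : ∀ u ∈ U₁, ∀ v ∈ U₁, ¬ G.Adj u v := by
    intro u hu v hv hadj
    obtain ⟨i, hi, rfl⟩ := (hmemU₁ u).1 hu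
    obtain ⟨j, hj, rfl⟩ := (hmemU₁ _).1 hv
    by_cases hij : i = j
    · subst hij
      exact G.irrefl hadj
    · exact hInd i j hij (by omega) hadj
  have hind₂ : ∀ u ∈ U₂, ∀ v ∈ U₂, ¬ G.Adj u v := by
    intro u hu v hv hadj
    obtain ⟨i, hi, rfl⟩ := (hmemU₂ u).1 hu
    obtain ⟨j, hj, rfl⟩ := (hmemU₂ _).1 hv
    by_cases hij : i = j
    · subst hij
      exact G.irrefl hadj
    · exact hInd i j hij (by omega) hadj
  -- the isomorphism with K_{n,n-1}
  have hne0 : ∀ k : ℕ, 0 < k → k < 2 * n → ((k : ℕ) : ZMod (2 * n)) ≠ 0 := by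
    intro k h1 h2 h
    have := congrArg ZMod.val h
    rw [hvlt k h2, ZMod.val_zero] at this
    omega
  set φ : Fin n ⊕ Fin (n - 1) → {x : V | x ≠ q 0} := fun p =>
    match p with
    | Sum.inl j => ⟨q ((2 * j.val + 1 : ℕ) : ZMod (2 * n)),
        fun h => hne0 _ (by omega) (by omega) (hl'.1 h)⟩
    | Sum.inr j => ⟨q ((2 * j.val + 2 : ℕ) : ZMod (2 * n)),
        fun h => hne0 _ (by omega) (by have := j.isLt; omega) (hl'.1 h)⟩
    with hφ
  have hφinj : Function.Injective φ := by
    intro p p' h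
    rw [Subtype.ext_iff] at h
    match p, p' with
    | Sum.inl j, Sum.inl k =>
      have := hl'.1 h
      have := natCast_zmod_inj (show 2 * j.val + 1 < 2 * n by have := j.isLt; omega)
        (show 2 * k.val + 1 < 2 * n by have := k.isLt; omega) this
      congr 1
      exact Fin.ext (by omega)
    | Sum.inl j, Sum.inr k =>
      exfalso
      have := cast_parity ⟨n, rfl⟩ (hl'.1 h)
      omega
    | Sum.inr j, Sum.inl k =>
      exfalso
      have := cast_parity ⟨n, rfl⟩ (hl'.1 h)
      omega
    | Sum.inr j, Sum.inr k =>
      have := hl'.1 h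
      have := natCast_zmod_inj (show 2 * j.val + 2 < 2 * n by have := j.isLt; omega)
        (show 2 * k.val + 2 < 2 * n by have := k.isLt; omega) this
      congr 1
      exact Fin.ext (by omega)
  have hφsurj : Function.Surjective φ := by
    rintro ⟨x, hx⟩
    obtain ⟨i, rfl⟩ := hbij.2 x
    have hi0 : i ≠ 0 := fun h => hx (by rw [h])
    have hiv0 : i.val ≠ 0 := fun h => hi0 ((ZMod.val_eq_zero i).1 h)
    have hivlt := ZMod.val_lt i
    by_cases hp : i.val % 2 = 1
    · refine ⟨Sum.inl ⟨i.val / 2, by omega⟩, ?_⟩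
      rw [hφ]
      apply Subtype.ext
      show q ((2 * (i.val / 2) + 1 : ℕ) : ZMod (2 * n)) = q i
      congr 1
      rw [show 2 * (i.val / 2) + 1 = i.val by omega]
      exact ZMod.natCast_rightInverse i
    · refine ⟨Sum.inr ⟨i.val / 2 - 1, by omega⟩, ?_⟩
      rw [hφ]
      apply Subtype.ext
      show q ((2 * (i.val / 2 - 1) + 2 : ℕ) : ZMod (2 * n)) = q i
      congr 1
      rw [show 2 * (i.val / 2 - 1) + 2 = i.val by omega]
      exact ZMod.natCast_rightInverse i
  have hiso : Nonempty ((G.induce {x | x ≠ q 0}) ≃g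
      completeBipartiteGraph (Fin n) (Fin (n - 1))) := by
    refine ⟨(SimpleGraph.Iso.symm ⟨Equiv.ofBijective φ ⟨hφinj, hφsurj⟩, ?_⟩)⟩
    intro p p'
    match p, p' with
    | Sum.inl j, Sum.inl k =>
      constructor
      · intro h
        exfalso
        have hadj : G.Adj (q ((2 * j.val + 1 : ℕ) : ZMod (2 * n)))
            (q ((2 * k.val + 1 : ℕ) : ZMod (2 * n))) := h
        by_cases hjk : j = k
        · subst hjk
          exact G.irrefl hadj
        · refine hInd _ _ (fun hc => hjk ?_) (by
            rw [hvlt _ (by have := j.isLt; omega), hvlt _ (by have := k.isLt; omega)]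
            omega) hadj
          have := natCast_zmod_inj (show 2 * j.val + 1 < 2 * n by have := j.isLt; omega)
            (show 2 * k.val + 1 < 2 * n by have := k.isLt; omega) hc
          exact Fin.ext (by omega)
      · intro h
        simp at h
    | Sum.inl j, Sum.inr k =>
      constructor
      · intro _
        simp
      · intro _
        show G.Adj (q ((2 * j.val + 1 : ℕ) : ZMod (2 * n)))
          (q ((2 * k.val + 2 : ℕ) : ZMod (2 * n)))
        by_contra hno
        rcases hH _ _ (by
          rw [hvlt _ (by have := j.isLt; omega), hvlt _ (by have := k.isLt; omega)]
          omega) hno with h | h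
        · exact hne0 _ (by omega) (by have := j.isLt; omega) h
        · exact hne0 _ (by omega) (by have := k.isLt; omega) h
    | Sum.inr j, Sum.inl k =>
      constructor
      · intro _
        simp
      · intro _
        show G.Adj (q ((2 * j.val + 2 : ℕ) : ZMod (2 * n)))
          (q ((2 * k.val + 1 : ℕ) : ZMod (2 * n)))
        by_contra hno
        rcases hH _ _ (by
          rw [hvlt _ (by have := j.isLt; omega), hvlt _ (by have := k.isLt; omega)]
          omega) hno with h | h
        · exact hne0 _ (by omega) (by have := j.isLt; omega) h
        · exact hne0 _ (by omega) (by have := k.isLt; omega) h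
    | Sum.inr j, Sum.inr k =>
      constructor
      · intro h
        exfalso
        have hadj : G.Adj (q ((2 * j.val + 2 : ℕ) : ZMod (2 * n)))
            (q ((2 * k.val + 2 : ℕ) : ZMod (2 * n))) := h
        by_cases hjk : j = k
        · subst hjk
          exact G.irrefl hadj
        · refine hInd _ _ (fun hc => hjk ?_) (by
            rw [hvlt _ (by have := j.isLt; omega), hvlt _ (by have := k.isLt; omega)]
            omega) hadj
          have := natCast_zmod_inj (show 2 * j.val + 2 < 2 * n by have := j.isLt; omega)
            (show 2 * k.val + 2 < 2 * n by have := k.isLt; omega) hc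
          exact Fin.ext (by omega)
      · intro h
        simp at h
  exact ⟨U₁, U₂, hdisj, hunion, hcard₁, hcard₂, hind₁, hind₂, q 0, hiso⟩
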